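/- For all integers 0 ≤ k ≤ n, there exists a family F ⊆ S_n with |F| = n!/(n−k)! such that every pair α, β ∈ F satisfies d_U(α, β) ≤ k. In other words, f_k(n) ≥ n!/(n−k)!, where f_k(n) denotes the maximum size of a subset of S_n all of whose pairwise Ulam distances are at most k. -/

import Mathlib

/-- The string (as a list) obtained from the one-line notation of `σ`
by deleting all symbols in `A`. -/
def ulamDel {n : ℕ} (σ : Equiv.Perm (Fin n)) (A : Finset (Fin n)) : List (Fin n) :=
  (List.ofFn fun i => σ i).filter (fun x => decide (x ∉ A))

/-- The Ulam distance between two permutations: the least number of distinct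
symbols that must be deleted from each until they are equal. -/
noncomputable def ulamDist {n : ℕ} (α β : Equiv.Perm (Fin n)) : ℕ :=
  sInf {m | ∃ A : Finset (Fin n), A.card = m ∧ ulamDel α A = ulamDel β A}

/-- `f_k(n)`: the maximum size of a set `F ⊆ S_n` such that `d_U(α, β) ≤ k`
for all `α, β ∈ F`. -/
noncomputable def maxDiamFamily (n k : ℕ) : ℕ :=
  sSup {m | ∃ F : Finset (Equiv.Perm (Fin n)), F.card = m ∧
    ∀ α ∈ F, ∀ β ∈ F, ulamDist α β ≤ k}

namespace UlamAux

variable {n k : ℕ}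

/-- The set of positions occupied by "high" symbols. -/
def highSet (f : Fin k ↪ Fin n) : Finset (Fin n) := Finset.univ.map f

lemma card_highSet (f : Fin k ↪ Fin n) : (highSet f).card = k := by
  simp [highSet]

lemma card_compl_highSet (hkn : k ≤ n) (f : Fin k ↪ Fin n) :
    ((highSet f)ᶜ).card = n - k := by
  rw [Finset.card_compl, card_highSet]
  simp

/-- Identification of the high positions with `Fin k`. -/
noncomputable def eHigh (f : Fin k ↪ Fin n) : Fin k ≃ {y // y ∈ highSet f} :=
  Equiv.ofBijective (fun j => ⟨f j, by simp [highSet]⟩) <| by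
    constructor
    · intro a b hab
      exact f.injective (by simpa using congrArg Subtype.val hab)
    · rintro ⟨x, hx⟩
      obtain ⟨j, -, rfl⟩ := Finset.mem_map.mp hx
      exact ⟨j, rfl⟩

/-- Order identification of the low positions with `Fin (n-k)`. -/
noncomputable def eLow (hkn : k ≤ n) (f : Fin k ↪ Fin n) :
    Fin (n - k) ≃o {y // y ∈ (highSet f)ᶜ} :=
  Finset.orderIsoOfFin _ (card_compl_highSet hkn f)

/-- The underlying function of the permutation associated to an embedding. -/
noncomputable def sigmaFun (hkn : k ≤ n) (f : Fin k ↪ Fin n) (x : Fin n) : Fin n :=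
  if h : x ∈ highSet f then
    ⟨n - k + ((eHigh f).symm ⟨x, h⟩ : Fin k).val,
      by have := ((eHigh f).symm ⟨x, h⟩).isLt; omega⟩
  else
    ⟨(((eLow hkn f).symm ⟨x, Finset.mem_compl.mpr h⟩ : Fin (n - k)) : ℕ),
      by have := ((eLow hkn f).symm ⟨x, Finset.mem_compl.mpr h⟩).isLt; omega⟩

lemma sigmaFun_lt_of_not_mem (hkn : k ≤ n) (f : Fin k ↪ Fin n) {x : Fin n}
    (h : x ∉ highSet f) : (sigmaFun hkn f x).val < n - k := by
  rw [sigmaFun, dif_neg h]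
  exact ((eLow hkn f).symm ⟨x, Finset.mem_compl.mpr h⟩).isLt

lemma le_sigmaFun_of_mem (hkn : k ≤ n) (f : Fin k ↪ Fin n) {x : Fin n}
    (h : x ∈ highSet f) : n - k ≤ (sigmaFun hkn f x).val := by
  rw [sigmaFun, dif_pos h]
  exact Nat.le_add_right _ _

lemma sigmaFun_mono (hkn : k ≤ n) (f : Fin k ↪ Fin n) {x y : Fin n}
    (hx : x ∉ highSet f) (hy : y ∉ highSet f) (hxy : x < y) :
    sigmaFun hkn f x < sigmaFun hkn f y := by
  simp only [sigmaFun]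
  rw [dif_neg hx, dif_neg hy]
  have : ((eLow hkn f).symm ⟨x, Finset.mem_compl.mpr hx⟩ : Fin (n - k)) <
      (eLow hkn f).symm ⟨y, Finset.mem_compl.mpr hy⟩ := by
    rw [(eLow hkn f).symm.lt_iff_lt]
    exact hxy
  exact this

lemma sigmaFun_injective (hkn : k ≤ n) (f : Fin k ↪ Fin n) :
    Function.Injective (sigmaFun hkn f) := by
  intro x y hxy
  by_cases hx : x ∈ highSet f <;> by_cases hy : y ∈ highSet f
  · simp only [sigmaFun] at hxy
    rw [dif_pos hx, dif_pos hy] at hxy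
    have h1 := ((eHigh f).symm ⟨x, hx⟩).isLt
    have h2 := ((eHigh f).symm ⟨y, hy⟩).isLt
    have : (eHigh f).symm ⟨x, hx⟩ = (eHigh f).symm ⟨y, hy⟩ := by
      have := congrArg Fin.val hxy
      simp only at this
      exact Fin.ext (by omega)
    exact congrArg Subtype.val ((eHigh f).symm.injective this)
  · exfalso
    have h1 := le_sigmaFun_of_mem hkn f hx
    have h2 := sigmaFun_lt_of_not_mem hkn f hy
    omega
  · exfalso
    have h1 := le_sigmaFun_of_mem hkn f hy
    have h2 := sigmaFun_lt_of_not_mem hkn f hx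
    omega
  · simp only [sigmaFun] at hxy
    rw [dif_neg hx, dif_neg hy] at hxy
    have : ((eLow hkn f).symm ⟨x, Finset.mem_compl.mpr hx⟩ : Fin (n - k)) =
        (eLow hkn f).symm ⟨y, Finset.mem_compl.mpr hy⟩ := Fin.ext (by
      have := congrArg Fin.val hxy
      simpa using this)
    exact congrArg Subtype.val ((eLow hkn f).symm.injective this)

/-- The permutation associated to an embedding `f : Fin k ↪ Fin n`. -/
noncomputable def sigmaPerm (hkn : k ≤ n) (f : Fin k ↪ Fin n) : Equiv.Perm (Fin n) :=
  Equiv.ofBijective (sigmaFun hkn f)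
    (Finite.injective_iff_bijective.mp (sigmaFun_injective hkn f))

lemma sigmaPerm_apply (hkn : k ≤ n) (f : Fin k ↪ Fin n) (x : Fin n) :
    sigmaPerm hkn f x = sigmaFun hkn f x := rfl

lemma sigmaPerm_apply_emb (hkn : k ≤ n) (f : Fin k ↪ Fin n) (j : Fin k) :
    (sigmaPerm hkn f (f j)).val = n - k + j.val := by
  have hmem : f j ∈ highSet f := by simp [highSet]
  rw [sigmaPerm_apply]
  simp only [sigmaFun]
  rw [dif_pos hmem]
  have hj : (eHigh f).symm ⟨f j, hmem⟩ = j := (Equiv.symm_apply_eq _).mpr rfl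
  simp [hj]

lemma sigmaPerm_injective (hkn : k ≤ n) :
    Function.Injective (sigmaPerm (n := n) (k := k) hkn) := by
  intro f g hfg
  ext j
  have h1 := sigmaPerm_apply_emb hkn f j
  have h2 := sigmaPerm_apply_emb hkn g j
  have : sigmaPerm hkn g (f j) = sigmaPerm hkn g (g j) := by
    refine Fin.ext ?_
    rw [h2, ← hfg]
    exact h1
  exact congrArg Fin.val ((sigmaPerm hkn g).injective this)

/-- The set of high symbols. -/
def highSymbols (hkn : k ≤ n) : Finset (Fin n) :=
  Finset.univ.map ⟨fun j : Fin k => ⟨n - k + j.val, by have := j.isLt; omega⟩,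
    fun a b hab => Fin.ext (by have := congrArg Fin.val hab; simp only at this; omega)⟩

lemma card_highSymbols (hkn : k ≤ n) : (highSymbols hkn).card = k := by
  simp [highSymbols]

lemma mem_highSymbols (hkn : k ≤ n) {x : Fin n} :
    x ∈ highSymbols hkn ↔ n - k ≤ x.val := by
  constructor
  · intro hx
    obtain ⟨j, -, rfl⟩ := Finset.mem_map.mp hx
    exact Nat.le_add_right _ _
  · intro hx
    refine Finset.mem_map.mpr ⟨⟨x.val - (n - k), by have := x.isLt; omega⟩,
      Finset.mem_univ _, ?_⟩
    have hx2 := x.isLt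
    apply Fin.ext
    show n - k + (x.val - (n - k)) = x.val
    omega

lemma ulamDel_sigmaPerm (hkn : k ≤ n) (f : Fin k ↪ Fin n) :
    (ulamDel (sigmaPerm hkn f) (highSymbols hkn)).Pairwise (· ≤ ·) ∧
    (ulamDel (sigmaPerm hkn f) (highSymbols hkn)).Nodup ∧
    (∀ y, y ∈ ulamDel (sigmaPerm hkn f) (highSymbols hkn) ↔ y ∉ highSymbols hkn) := by
  refine ⟨?_, ?_, ?_⟩
  · have hpw : (List.ofFn fun i => sigmaPerm hkn f i).Pairwise
        (fun a b => a ∉ highSymbols hkn → b ∉ highSymbols hkn → a ≤ b) := by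
      rw [List.pairwise_ofFn]
      intro i j hij ha hb
      rw [mem_highSymbols hkn, not_le] at ha hb
      have hi : i ∉ highSet f := by
        intro hmem
        exact absurd (le_sigmaFun_of_mem hkn f hmem) (by rw [← sigmaPerm_apply]; omega)
      have hj : j ∉ highSet f := by
        intro hmem
        exact absurd (le_sigmaFun_of_mem hkn f hmem) (by rw [← sigmaPerm_apply]; omega)
      exact le_of_lt (sigmaFun_mono hkn f hi hj hij)
    have hfil := hpw.filter (fun x => decide (x ∉ highSymbols hkn))
    refine List.Pairwise.imp_of_mem ?_ hfil
    intro a b ha hb hab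
    rw [ulamDel, List.mem_filter] at ha hb
    exact hab (by simpa using ha.2) (by simpa using hb.2)
  · exact ((List.nodup_ofFn.mpr (sigmaPerm hkn f).injective)).filter _
  · intro y
    rw [ulamDel, List.mem_filter]
    simp only [decide_not, Bool.not_eq_true', decide_eq_false_iff_not]
    constructor
    · exact fun h => h.2
    · intro h
      refine ⟨?_, h⟩
      rw [List.mem_ofFn]
      exact ⟨(sigmaPerm hkn f).symm y, Equiv.apply_symm_apply _ _⟩

lemma ulamDel_eq (hkn : k ≤ n) (f g : Fin k ↪ Fin n) :
    ulamDel (sigmaPerm hkn f) (highSymbols hkn) =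
      ulamDel (sigmaPerm hkn g) (highSymbols hkn) := by
  obtain ⟨hs1, hn1, hm1⟩ := ulamDel_sigmaPerm hkn f
  obtain ⟨hs2, hn2, hm2⟩ := ulamDel_sigmaPerm hkn g
  refine List.Perm.eq_of_pairwise' hs1 hs2 ?_
  rw [List.perm_ext_iff_of_nodup hn1 hn2]
  intro y
  rw [hm1 y, hm2 y]

end UlamAux

/-- For all `0 ≤ k ≤ n` there is a family `F ⊆ S_n` with
`|F| = n!/(n−k)!` whose pairwise Ulam distances are all at most `k`;
in other words, `f_k(n) ≥ n!/(n−k)!`. -/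
theorem ulam_diametric_lower_bound (n k : ℕ) (hkn : k ≤ n) :
    (∃ F : Finset (Equiv.Perm (Fin n)), F.card = n.factorial / (n - k).factorial ∧
        ∀ α ∈ F, ∀ β ∈ F, ulamDist α β ≤ k) ∧
      n.factorial / (n - k).factorial ≤ maxDiamFamily n k := by
  classical
  set F : Finset (Equiv.Perm (Fin n)) :=
    Finset.image (UlamAux.sigmaPerm hkn) Finset.univ with hF
  have hcard : F.card = n.factorial / (n - k).factorial := by
    rw [hF, Finset.card_image_of_injective _ (UlamAux.sigmaPerm_injective hkn),
      Finset.card_univ, Fintype.card_embedding_eq, Fintype.card_fin, Fintype.card_fin,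
      Nat.descFactorial_eq_div hkn]
  have hdist : ∀ α ∈ F, ∀ β ∈ F, ulamDist α β ≤ k := by
    intro α hα β hβ
    rw [hF, Finset.mem_image] at hα hβ
    obtain ⟨f, -, rfl⟩ := hα
    obtain ⟨g, -, rfl⟩ := hβ
    exact Nat.sInf_le ⟨UlamAux.highSymbols hkn, UlamAux.card_highSymbols hkn,
      UlamAux.ulamDel_eq hkn f g⟩
  refine ⟨⟨F, hcard, hdist⟩, ?_⟩
  refine le_csSup ?_ ⟨F, hcard, hdist⟩
  refine ⟨Fintype.card (Equiv.Perm (Fin n)), ?_⟩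
  rintro m ⟨G, rfl, -⟩
  exact Finset.card_le_univ G
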